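/- Let A ⊆ ℝ, f : A → ℝ, and a, L ∈ ℝ. Then the classical limit of f at a equals L if and only if for every ε > 0 there exists δ > 0 such that the set {x ∈ ((a−δ, a+δ) \ {a}) ∩ A : |f(x) − L| ≥ ε} has no accumulation (limit) points in ℝ. -/

import Mathlib

open Set

/-- Exceptional set for the limit of `f` restricted to `A` at `a` with value `L`. -/
def excepSet (A : Set ℝ) (f : ℝ → ℝ) (a L δ ε : ℝ) : Set ℝ :=
  {x | x ∈ Set.Ioo (a - δ) (a + δ) ∧ x ≠ a ∧ x ∈ A ∧ ε ≤ |f x - L|}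

theorem stmt_1 (A : Set ℝ) (f : ℝ → ℝ) (a L : ℝ) :
    (∀ ε > 0, ∃ δ > 0, excepSet A f a L δ ε = ∅) ↔
    (∀ ε > 0, ∃ δ > 0, ∀ x : ℝ, ¬ AccPt x (Filter.principal (excepSet A f a L δ ε))) := by
  constructor
  · intro h ε hε
    obtain ⟨δ, hδ, hemp⟩ := h ε hε
    exact ⟨δ, hδ, fun x hx => by simp [hemp] at hx; exact hx.1 (by simp)⟩
  · intro h ε hε
    obtain ⟨δ, hδ, hacc⟩ := h ε hε
    -- the set is finite
    have hsub : excepSet A f a L δ ε ⊆ Set.Icc (a - δ) (a + δ) := fun x hx =>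
      Set.Ioo_subset_Icc_self hx.1
    have hfin : (excepSet A f a L δ ε).Finite := by
      rw [← Set.not_infinite]
      intro hinf
      obtain ⟨x, _, hx⟩ := hinf.exists_accPt_of_subset_isCompact isCompact_Icc hsub
      exact hacc x hx
    by_cases hne : (excepSet A f a L δ ε).Nonempty
    · set S := excepSet A f a L δ ε
      have hne' : ((fun x => |x - a|) '' S).Nonempty := hne.image _
      obtain ⟨m, hm, hmin⟩ : ∃ m ∈ (fun x => |x - a|) '' S, ∀ a' ∈ (fun x => |x - a|) '' S, id a' ≤ id m → id m = id a' := by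
        obtain ⟨m, hm, hmin⟩ := (hfin.image (fun x => |x - a|)).exists_minimalFor id _ hne'
        exact ⟨m, hm, fun y hy hle => le_antisymm (hmin hy hle) hle⟩
      obtain ⟨x₀, hx₀, hx₀m⟩ := hm
      have hmpos : 0 < m := by
        rw [← hx₀m]; exact abs_pos.mpr (sub_ne_zero.mpr hx₀.2.1)
      refine ⟨min m δ, lt_min hmpos hδ, ?_⟩
      ext x
      simp only [excepSet, Set.mem_setOf_eq, Set.mem_Ioo, Set.mem_empty_iff_false, iff_false]
      rintro ⟨⟨h1, h2⟩, hxa, hxA, hxf⟩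
      have hxS : x ∈ S := by
        refine ⟨⟨?_, ?_⟩, hxa, hxA, hxf⟩
        · linarith [min_le_right m δ]
        · linarith [min_le_right m δ]
      have : m ≤ |x - a| := by
        by_contra hlt
        push_neg at hlt
        have heq := hmin (|x - a|) ⟨x, hxS, rfl⟩ hlt.le
        simp only [id] at heq
        exact absurd (heq ▸ hlt) (lt_irrefl _)
      have : |x - a| < m := by
        rw [abs_sub_lt_iff]
        constructor <;> linarith [min_le_left m δ]
      linarith
    · exact ⟨δ, hδ, Set.not_nonempty_iff_eq_empty.mp hne⟩
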